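/- Let α > 0 and let φ be the cardinal hyperbolic GB-splines with phase α. Define, for p ≥ 1, h_p^{H_α}(θ) := φ p ((p+1)/2) + 2·Σ_{k=1}^{⌊p/2⌋} φ p ((p+1)/2 − k)·cos(kθ), and, for p ≥ 2, f_p^{H_α}(θ) := −φ̈ p ((p+1)/2) − 2·Σ_{k=1}^{⌊p/2⌋} φ̈ p ((p+1)/2 − k)·cos(kθ), where φ̈ p is the second derivative of t ↦ φ p t. Then for every integer p ≥ 3 and every θ ∈ [−π, π]: f_p^{H_α}(θ) = (2 − 2·cos θ) · h_{p−2}^{H_α}(θ). -/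

import Mathlib

open Real MeasureTheory

noncomputable def hSym (φ : ℕ → ℝ → ℝ) (p : ℕ) (θ : ℝ) : ℝ :=
  φ p (((p : ℝ) + 1) / 2) +
    2 * ∑ k ∈ Finset.Icc 1 (p / 2), φ p (((p : ℝ) + 1) / 2 - (k : ℝ)) * Real.cos ((k : ℝ) * θ)

noncomputable def fSym (φ : ℕ → ℝ → ℝ) (p : ℕ) (θ : ℝ) : ℝ :=
  -(deriv (deriv (φ p)) (((p : ℝ) + 1) / 2)) -
    2 * ∑ k ∈ Finset.Icc 1 (p / 2),
      deriv (deriv (φ p)) (((p : ℝ) + 1) / 2 - (k : ℝ)) * Real.cos ((k : ℝ) * θ)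


private lemma keySum (b : ℕ → ℝ) (θ : ℝ) : ∀ m : ℕ,
    2*b 0 - 2*b 1 - 2*∑ k ∈ Finset.Icc 1 (m+1), (b (k-1) - 2*b k + b (k+1)) * Real.cos ((k:ℝ)*θ)
    = (2 - 2*Real.cos θ)*(b 0 + 2*∑ k ∈ Finset.Icc 1 m, b k * Real.cos ((k:ℝ)*θ))
      + 2*b (m+1)*(2*Real.cos (((m:ℝ)+1)*θ) - Real.cos ((m:ℝ)*θ))
      - 2*b (m+2)*Real.cos (((m:ℝ)+1)*θ) := by
  intro m
  induction m with
  | zero =>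
      simp [Finset.Icc_self]
      ring
  | succ n ih =>
      have hcos : Real.cos ((n:ℝ)*θ) + Real.cos (((n:ℝ)+2)*θ)
          = 2*Real.cos (((n:ℝ)+1)*θ)*Real.cos θ := by
        rw [Real.cos_add_cos, show ((n:ℝ)*θ + ((n:ℝ)+2)*θ)/2 = ((n:ℝ)+1)*θ by ring,
          show ((n:ℝ)*θ - ((n:ℝ)+2)*θ)/2 = -θ by ring, Real.cos_neg]
      have hs : ∑ k ∈ Finset.Icc 1 (n+1), b k * Real.cos ((k:ℝ)*θ)
          = (∑ k ∈ Finset.Icc 1 n, b k * Real.cos ((k:ℝ)*θ)) + b (n+1) * Real.cos (((n:ℝ)+1)*θ) := by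
        rw [Finset.sum_Icc_succ_top (by omega : 1 ≤ n+1)]
        push_cast
        ring
      have hsA : ∑ k ∈ Finset.Icc 1 (n+2), (b (k-1) - 2*b k + b (k+1)) * Real.cos ((k:ℝ)*θ)
          = (∑ k ∈ Finset.Icc 1 (n+1), (b (k-1) - 2*b k + b (k+1)) * Real.cos ((k:ℝ)*θ))
            + (b (n+1) - 2*b (n+2) + b (n+3)) * Real.cos (((n:ℝ)+2)*θ) := by
        rw [Finset.sum_Icc_succ_top (by omega : 1 ≤ n+2), show n+2-1 = n+1 from rfl,
          show ((n+2:ℕ):ℝ) = (n:ℝ)+2 by push_cast; ring]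
      simp only [show n+1+1 = n+2 from rfl, show n+1+2 = n+3 from rfl]
      push_cast
      push_cast at ih
      rw [show (n:ℝ)+1+1 = (n:ℝ)+2 from by ring]
      linear_combination ih - 2*hsA + (4*Real.cos θ - 4) * hs - 2*b (n+1) * hcos



section phiAux

variable {α : ℝ} {φ : ℕ → ℝ → ℝ}

private lemma phi1_eq (hα : 0 < α)
    (hφ1 : ∀ t : ℝ, φ 1 t =
      if 0 ≤ t ∧ t < 1 then α / (2 * (Real.cosh α - 1)) * Real.sinh (α * t)
      else if 1 ≤ t ∧ t < 2 then α / (2 * (Real.cosh α - 1)) * Real.sinh (α * (2 - t))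
      else 0) :
    ∀ t : ℝ, φ 1 t = α / (2 * (Real.cosh α - 1)) * max 0 (Real.sinh (α * (1 - |t - 1|))) := by
  intro t
  rw [hφ1 t]
  split_ifs with h1 h2
  · rw [show (1:ℝ) - |t-1| = t by rw [abs_of_nonpos (by linarith [h1.2])]; ring,
      max_eq_right (Real.sinh_nonneg_iff.mpr (mul_nonneg hα.le h1.1))]
  · rw [show (1:ℝ) - |t-1| = 2 - t by rw [abs_of_nonneg (by linarith [h2.1])]; ring,
      max_eq_right (Real.sinh_nonneg_iff.mpr (mul_nonneg hα.le (by linarith [h2.2])))]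
  · rcases lt_or_ge t 0 with ht | ht
    · rw [show (1:ℝ) - |t-1| = t by rw [abs_of_nonpos (by linarith)]; ring,
        max_eq_left (Real.sinh_nonpos_iff.mpr (by nlinarith)), mul_zero]
    · have ht2 : 2 ≤ t := by
        by_contra hc
        push_neg at hc
        rcases lt_or_ge t 1 with h | h
        exacts [h1 ⟨ht, h⟩, h2 ⟨h, hc⟩]
      rw [show (1:ℝ) - |t-1| = 2 - t by rw [abs_of_nonneg (by linarith)]; ring,
        max_eq_left (Real.sinh_nonpos_iff.mpr (by nlinarith)), mul_zero]

private lemma phi1_cont (hα : 0 < α)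
    (hφ1 : ∀ t : ℝ, φ 1 t =
      if 0 ≤ t ∧ t < 1 then α / (2 * (Real.cosh α - 1)) * Real.sinh (α * t)
      else if 1 ≤ t ∧ t < 2 then α / (2 * (Real.cosh α - 1)) * Real.sinh (α * (2 - t))
      else 0) :
    Continuous (φ 1) := by
  have he : φ 1 = fun t => α / (2 * (Real.cosh α - 1)) * max 0 (Real.sinh (α * (1 - |t - 1|))) :=
    funext (phi1_eq hα hφ1)
  rw [he]
  exact continuous_const.mul (continuous_const.max (Real.continuous_sinh.comp
    (continuous_const.mul (continuous_const.sub ((continuous_id.sub continuous_const).abs)))))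

variable (hα : 0 < α)
    (hφ1 : ∀ t : ℝ, φ 1 t =
      if 0 ≤ t ∧ t < 1 then α / (2 * (Real.cosh α - 1)) * Real.sinh (α * t)
      else if 1 ≤ t ∧ t < 2 then α / (2 * (Real.cosh α - 1)) * Real.sinh (α * (2 - t))
      else 0)
    (hrec : ∀ q : ℕ, 2 ≤ q → ∀ t : ℝ,
      φ q t = ∫ s in (0:ℝ)..t, (φ (q - 1) s - φ (q - 1) (s - 1)))

include hα hφ1 hrec

private lemma phi_cont : ∀ q : ℕ, Continuous (φ (q+1)) := by
  intro q
  induction q with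
  | zero => exact phi1_cont hα hφ1
  | succ n ih =>
      have hg : Continuous (fun s => φ (n+1) s - φ (n+1) (s-1)) :=
        ih.sub (ih.comp (continuous_id.sub continuous_const))
      have hφ : φ (n+2) = fun u => ∫ s in (0:ℝ)..u, (φ (n+1) s - φ (n+1) (s-1)) := by
        funext u
        rw [hrec (n+2) (by omega) u, show n+2-1 = n+1 from rfl]
      rw [show n+1+1 = n+2 from rfl, hφ]
      exact continuous_iff_continuousAt.mpr fun t =>
        ((hg.integral_hasStrictDerivAt 0 t).hasDerivAt).continuousAt

private lemma phi_zero : ∀ q : ℕ, ∀ t : ℝ, t ≤ 0 → φ (q+1) t = 0 := by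
  intro q
  induction q with
  | zero =>
      intro t ht
      rw [phi1_eq hα hφ1 t, show (1:ℝ) - |t-1| = t by rw [abs_of_nonpos (by linarith)]; ring,
        max_eq_left (Real.sinh_nonpos_iff.mpr (by nlinarith)), mul_zero]
  | succ n ih =>
      intro t ht
      rw [show n+1+1 = n+2 from rfl, hrec (n+2) (by omega) t, show n+2-1 = n+1 from rfl]
      rw [intervalIntegral.integral_congr (g := fun _ => (0:ℝ)) ?_]
      · simp
      · intro s hs
        rw [Set.uIcc_of_ge ht] at hs
        have hs0 : s ≤ 0 := hs.2
        simp [ih s hs0, ih (s-1) (by linarith)]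

private lemma phi_deriv : ∀ q : ℕ, ∀ t : ℝ,
    HasDerivAt (φ (q+2)) (φ (q+1) t - φ (q+1) (t-1)) t := by
  intro q t
  have hg : Continuous (fun s => φ (q+1) s - φ (q+1) (s-1)) :=
    (phi_cont hα hφ1 hrec q).sub ((phi_cont hα hφ1 hrec q).comp (continuous_id.sub continuous_const))
  have hφ : φ (q+2) = fun u => ∫ s in (0:ℝ)..u, (φ (q+1) s - φ (q+1) (s-1)) := by
    funext u
    rw [hrec (q+2) (by omega) u, show q+2-1 = q+1 from rfl]
  rw [hφ]
  exact (hg.integral_hasStrictDerivAt 0 t).hasDerivAt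

private lemma phi_symm : ∀ q : ℕ, ∀ x : ℝ,
    φ (q+1) (((q:ℝ)+2)/2 + x) = φ (q+1) (((q:ℝ)+2)/2 - x) := by
  intro q
  induction q with
  | zero =>
      intro x
      rw [show (((0:ℕ):ℝ)+2)/2 = 1 by norm_num]
      simp only [phi1_eq hα hφ1]
      rw [show (1:ℝ)+x-1 = x by ring, show (1:ℝ)-x-1 = -x by ring, abs_neg]
  | succ n ih =>
      intro x
      have hf : Continuous (φ (n+1)) := phi_cont hα hφ1 hrec n
      have hf' : Continuous (fun s => φ (n+1) (s-1)) :=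
        hf.comp (continuous_id.sub continuous_const)
      have hg : Continuous (fun s => φ (n+1) s - φ (n+1) (s-1)) := hf.sub hf'
      have hc : ((↑(n+1):ℝ)+2)/2 = ((n:ℝ)+3)/2 := by push_cast; ring
      rw [hc, show n+1+1 = n+2 from rfl]
      set c : ℝ := ((n:ℝ)+3)/2 with hcdef
      have h1 : φ (n+2) (c+x) - φ (n+2) (c-x)
          = ∫ s in (c-x)..(c+x), (φ (n+1) s - φ (n+1) (s-1)) := by
        rw [hrec (n+2) (by omega) (c+x), hrec (n+2) (by omega) (c-x),
          show n+2-1 = n+1 from rfl]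
        exact intervalIntegral.integral_interval_sub_left
          (hg.intervalIntegrable _ _) (hg.intervalIntegrable _ _)
      have hsymm : ∀ s : ℝ, φ (n+1) s = φ (n+1) ((n:ℝ)+2 - s) := by
        intro s
        have h := ih (s - ((n:ℝ)+2)/2)
        rw [show ((n:ℝ)+2)/2 + (s - ((n:ℝ)+2)/2) = s by ring,
          show ((n:ℝ)+2)/2 - (s - ((n:ℝ)+2)/2) = (n:ℝ)+2 - s by ring] at h
        exact h
      have h2 : (∫ s in (c-x)..(c+x), (φ (n+1) s - φ (n+1) (s-1)))
          = (∫ s in (c-x)..(c+x), φ (n+1) s) - ∫ s in (c-x)..(c+x), φ (n+1) (s-1) :=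
        intervalIntegral.integral_sub (hf.intervalIntegrable _ _) (hf'.intervalIntegrable _ _)
      have h3 : (∫ s in (c-x)..(c+x), φ (n+1) s) = ∫ s in (c-1-x)..(c-1+x), φ (n+1) s := by
        rw [intervalIntegral.integral_congr (g := fun s => φ (n+1) ((n:ℝ)+2 - s))
          (fun s _ => hsymm s),
          intervalIntegral.integral_comp_sub_left (φ (n+1)) ((n:ℝ)+2),
          show (n:ℝ)+2 - (c+x) = c-1-x by rw [hcdef]; ring,
          show (n:ℝ)+2 - (c-x) = c-1+x by rw [hcdef]; ring]
      have h4 : (∫ s in (c-x)..(c+x), φ (n+1) (s-1)) = ∫ s in (c-1-x)..(c-1+x), φ (n+1) s := by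
        rw [intervalIntegral.integral_comp_sub_right (φ (n+1)) 1,
          show c - x - 1 = c-1-x by ring, show c + x - 1 = c-1+x by ring]
      rw [h2, h3, h4, sub_self] at h1
      linarith [h1]

private lemma phi_dd : ∀ q : ℕ, ∀ t : ℝ,
    deriv (deriv (φ (q+3))) t = φ (q+1) t - 2*φ (q+1) (t-1) + φ (q+1) (t-2) := by
  intro q t
  have hd1 : deriv (φ (q+3)) = fun u => φ (q+2) u - φ (q+2) (u-1) :=
    funext fun u => (phi_deriv hα hφ1 hrec (q+1) u).deriv
  rw [hd1]
  have ha := phi_deriv hα hφ1 hrec q t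
  have hb := phi_deriv hα hφ1 hrec q (t-1)
  have hb' : HasDerivAt (fun u => φ (q+2) (u-1)) (φ (q+1) (t-1) - φ (q+1) (t-1-1)) t := by
    have hcomp := HasDerivAt.comp t hb ((hasDerivAt_id t).sub_const 1)
    rw [mul_one] at hcomp
    exact hcomp
  rw [HasDerivAt.deriv (f := fun u => φ (q+2) u - φ (q+2) (u-1)) (ha.sub hb'), show t-1-1 = t-2 by ring]
  ring

end phiAux

theorem fSym_eq_hSym_hyp (α : ℝ) (hα : 0 < α) (φ : ℕ → ℝ → ℝ)
    (hφ1 : ∀ t : ℝ, φ 1 t =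
      if 0 ≤ t ∧ t < 1 then α / (2 * (Real.cosh α - 1)) * Real.sinh (α * t)
      else if 1 ≤ t ∧ t < 2 then α / (2 * (Real.cosh α - 1)) * Real.sinh (α * (2 - t))
      else 0)
    (hrec : ∀ q : ℕ, 2 ≤ q → ∀ t : ℝ,
      φ q t = ∫ s in (0:ℝ)..t, (φ (q - 1) s - φ (q - 1) (s - 1)))
    (p : ℕ) (hp : 3 ≤ p)
    (θ : ℝ) (hθ : θ ∈ Set.Icc (-Real.pi) Real.pi) :
    fSym φ p θ = (2 - 2 * Real.cos θ) * hSym φ (p - 2) θ := by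
  obtain ⟨r, rfl⟩ : ∃ r, p = r + 3 := ⟨p - 3, by omega⟩
  show fSym φ (r+3) θ = (2 - 2 * Real.cos θ) * hSym φ (r+1) θ
  set m : ℕ := (r+1)/2 with hmdef
  have hM : (r+3)/2 = m + 1 := by omega
  set c : ℝ := ((r:ℝ)+2)/2 with hcdef
  set B : ℕ → ℝ := fun k => φ (r+1) (c - (k:ℝ)) with hBdef
  have hBz : ∀ j : ℕ, m + 1 ≤ j → B j = 0 := by
    intro j hj
    apply phi_zero hα hφ1 hrec r
    have h1 : (r:ℝ) ≤ 2*(m:ℝ) := by exact_mod_cast (by omega : r ≤ 2*m)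
    have h2 : (m:ℝ) + 1 ≤ (j:ℝ) := by exact_mod_cast hj
    rw [hcdef]
    linarith
  have hHead : deriv (deriv (φ (r+3))) (((↑(r+3):ℝ)+1)/2) = 2*B 1 - 2*B 0 := by
    rw [phi_dd hα hφ1 hrec r, show ((↑(r+3):ℝ)+1)/2 = c + 1 by rw [hcdef]; push_cast; ring]
    have hsym1 : φ (r+1) (c+1) = φ (r+1) (c-1) := by
      have h := phi_symm hα hφ1 hrec r 1
      rw [← hcdef] at h
      exact h
    rw [hsym1, show c+1-1 = c-((0:ℕ):ℝ) by push_cast; ring, show c+1-2 = c-((1:ℕ):ℝ) by push_cast; ring,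
      show c-1 = c-((1:ℕ):ℝ) by push_cast; ring]
    simp only [hBdef]
    ring
  have hTerm : ∀ k ∈ Finset.Icc 1 (m+1),
      deriv (deriv (φ (r+3))) (((↑(r+3):ℝ)+1)/2 - (k:ℝ)) * Real.cos ((k:ℝ)*θ)
      = (B (k-1) - 2*B k + B (k+1)) * Real.cos ((k:ℝ)*θ) := by
    intro k hk
    have hk1 : 1 ≤ k := (Finset.mem_Icc.mp hk).1
    rw [phi_dd hα hφ1 hrec r,
      show ((↑(r+3):ℝ)+1)/2 - (k:ℝ) = c - ((k:ℝ) - 1) by rw [hcdef]; push_cast; ring,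
      show c - ((k:ℝ)-1) - 1 = c - (k:ℝ) by ring,
      show c - ((k:ℝ)-1) - 2 = c - ((k:ℝ)+1) by ring]
    simp only [hBdef]
    rw [Nat.cast_sub hk1, Nat.cast_one, Nat.cast_add, Nat.cast_one]
  have hLeft : fSym φ (r+3) θ = 2*B 0 - 2*B 1
      - 2*∑ k ∈ Finset.Icc 1 (m+1), (B (k-1) - 2*B k + B (k+1)) * Real.cos ((k:ℝ)*θ) := by
    unfold fSym
    rw [hM, hHead, Finset.sum_congr rfl hTerm]
    ring
  have hRight : hSym φ (r+1) θ = B 0 + 2*∑ k ∈ Finset.Icc 1 m, B k * Real.cos ((k:ℝ)*θ) := by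
    unfold hSym
    rw [show ((↑(r+1):ℝ)+1)/2 = c by rw [hcdef]; push_cast; ring, ← hmdef]
    simp only [hBdef]
    norm_num
  have key := keySum B θ m
  rw [hBz (m+1) (by omega), hBz (m+2) (by omega)] at key
  simp only [mul_zero, zero_mul, add_zero, sub_zero] at key
  rw [hLeft, hRight]
  linarith [key]
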